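/- Let d ≥ 2 and let N be a natural number with 1 ≤ N < d². Let ψ_0, …, ψ_{d²−1} be unit vectors in ℂ^d such that the rank-one projections |ψ_y⟩⟨ψ_y| (y = 0, …, d²−1) are linearly independent over ℂ (hence span the full space of d×d complex matrices), and let φ_0, …, φ_N be unit vectors in ℂ^d such that the rank-one projections |φ_x⟩⟨φ_x| (x = 0, …, N) are linearly independent over ℂ. Let Δ_1, …, Δ_N be arbitrary d×d complex matrices. Then there do NOT exist scalars μ_{i,x} ∈ ℂ (1 ≤ i ≤ N, 0 ≤ x ≤ N) and density matrices ρ_0, …, ρ_{d²−1} on ℂ^d such that Tr(ρ_y · (Σ_{i=1}^N μ_{i,x} Δ_i)) = |⟨ψ_y, φ_x⟩|² holds for all x ∈ {0,…,N} and y ∈ {0,…,d²−1}. In particular, the quantum correlations p_Q(0|x,y) = |⟨ψ_y, φ_x⟩|² cannot be realized by operations whose POVM elements lie in the linear span of any family of fewer than d² linearly independent free operation elements. -/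

import Mathlib

open Matrix Complex
open scoped ComplexOrder

/-- The rank-one projection (outer product) `|ψ⟩⟨ψ|` of a vector `ψ ∈ ℂ^d`. -/
noncomputable def outer {d : ℕ} (ψ : Fin d → ℂ) : Matrix (Fin d) (Fin d) ℂ :=
  Matrix.of fun i j => ψ i * (starRingEnd ℂ) (ψ j)

/-- The inner product `⟨ψ, φ⟩ = ∑ i, conj (ψ i) * φ i` on `ℂ^d`. -/
noncomputable def qinner {d : ℕ} (ψ φ : Fin d → ℂ) : ℂ :=
  ∑ i, (starRingEnd ℂ) (ψ i) * φ i

/-- A density matrix on `ℂ^d`: positive semidefinite with trace 1. -/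
def IsDensityMatrix {d : ℕ} (ρ : Matrix (Fin d) (Fin d) ℂ) : Prop :=
  ρ.PosSemidef ∧ ρ.trace = 1

/-- Multiplication by `M` on the right followed by trace, as a linear map in the left factor. -/
noncomputable def traceMulRight {d : ℕ} (M : Matrix (Fin d) (Fin d) ℂ) :
    Matrix (Fin d) (Fin d) ℂ →ₗ[ℂ] ℂ where
  toFun A := (A * M).trace
  map_add' A B := by simp [add_mul]
  map_smul' c A := by simp [smul_mul_assoc]

/-- Trace against fixed left factors `ρ y`, as a linear map into `ℂ^n`. -/
noncomputable def traceFun {d n : ℕ} (ρ : Fin n → Matrix (Fin d) (Fin d) ℂ) :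
    Matrix (Fin d) (Fin d) ℂ →ₗ[ℂ] (Fin n → ℂ) where
  toFun M y := (ρ y * M).trace
  map_add' A B := by funext y; simp [mul_add]
  map_smul' c A := by funext y; simp [Matrix.mul_smul]

lemma trace_outer_mul_outer {d : ℕ} (a b : Fin d → ℂ) :
    (outer a * outer b).trace = ((‖qinner a b‖ ^ 2 : ℝ) : ℂ) := by
  have h : (outer a * outer b).trace = qinner a b * qinner b a := by
    simp only [Matrix.trace, Matrix.diag, Matrix.mul_apply, outer, qinner, Matrix.of_apply,
      Finset.sum_mul_sum]
    rw [Finset.sum_comm]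
    exact Finset.sum_congr rfl fun j _ => Finset.sum_congr rfl fun i _ => by ring
  have h2 : qinner b a = (starRingEnd ℂ) (qinner a b) := by
    simp [qinner, map_sum, mul_comm]
  rw [h, h2, Complex.mul_conj, Complex.normSq_eq_norm_sq]

lemma traceMulRight_eq_zero {d : ℕ} {M : Matrix (Fin d) (Fin d) ℂ}
    (h : ∀ A, (A * M).trace = 0) : M = 0 := by
  ext i j
  have := h (Matrix.single j i (1 : ℂ))
  rw [Matrix.trace, Finset.sum_eq_single j
    (fun k _ hk => by
      simp [Matrix.diag, Matrix.single_mul_apply_of_ne _ _ _ _ _ hk])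
    (by simp)] at this
  simpa [Matrix.diag, Matrix.single_mul_apply_same] using this

/-- Theorem 2: if the free operation elements lie in the span of `N < d²` linearly
independent matrices `Δ_i`, then the quantum correlations `p_Q(0|x,y) = |⟨ψ_y, φ_x⟩|²`
built from a spanning family of pure preparations `ψ_0, …, ψ_{d²-1}` and linearly
independent pure effects `φ_0, …, φ_N` cannot be realized by free operations. -/
theorem stmt_1 (d N : ℕ) (hd : 2 ≤ d) (hN1 : 1 ≤ N) (hN2 : N < d ^ 2)
    (ψ : Fin (d ^ 2) → Fin d → ℂ) (hψu : ∀ y, qinner (ψ y) (ψ y) = 1)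
    (hψli : LinearIndependent ℂ fun y => outer (ψ y))
    (φ : Fin (N + 1) → Fin d → ℂ) (hφu : ∀ x, qinner (φ x) (φ x) = 1)
    (hφli : LinearIndependent ℂ fun x => outer (φ x))
    (Δ : Fin N → Matrix (Fin d) (Fin d) ℂ) :
    ¬ ∃ (μ : Fin N → Fin (N + 1) → ℂ)
        (ρ : Fin (d ^ 2) → Matrix (Fin d) (Fin d) ℂ),
        (∀ y, IsDensityMatrix (ρ y)) ∧
        ∀ (x : Fin (N + 1)) (y : Fin (d ^ 2)),
          (ρ y * (∑ i, μ i x • Δ i)).trace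
            = ((‖qinner (ψ y) (φ x)‖ ^ 2 : ℝ) : ℂ) := by
  rintro ⟨μ, ρ, hdm, h⟩
  classical
  have hd2 : 0 < d ^ 2 := lt_of_le_of_lt (Nat.zero_le N) hN2
  have : Nonempty (Fin (d ^ 2)) := ⟨⟨0, hd2⟩⟩
  -- the outer products of ψ span everything
  have hspan : Submodule.span ℂ (Set.range fun y => outer (ψ y)) = ⊤ := by
    apply hψli.span_eq_top_of_card_eq_finrank
    simp [Module.finrank_matrix, pow_two]
  -- G is injective
  set G : Matrix (Fin d) (Fin d) ℂ →ₗ[ℂ] (Fin (d ^ 2) → ℂ) :=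
    traceFun (fun y => outer (ψ y)) with hG
  have hGinj : Function.Injective G := by
    rw [← LinearMap.ker_eq_bot, Submodule.eq_bot_iff]
    intro M hM
    apply traceMulRight_eq_zero (M := M)
    intro A
    have hT : traceMulRight M = (0 : Matrix (Fin d) (Fin d) ℂ →ₗ[ℂ] ℂ) := by
      apply LinearMap.ext_on_range hspan
      intro y
      exact congrFun (congrArg (fun f => f) hM) y
    exact congrFun (congrArg DFunLike.coe hT) A
  -- F is the trace functional against the states ρ
  set F : Matrix (Fin d) (Fin d) ℂ →ₗ[ℂ] (Fin (d ^ 2) → ℂ) := traceFun ρ with hF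
  set v : Fin (N + 1) → (Fin (d ^ 2) → ℂ) := fun x => G (outer (φ x)) with hv
  -- v is linearly independent
  have hvli : LinearIndependent ℂ v :=
    (hφli.map' G (LinearMap.ker_eq_bot.mpr hGinj))
  -- each v x lies in the span of the F (Δ i)
  set S : Submodule ℂ (Fin (d ^ 2) → ℂ) :=
    Submodule.span ℂ (Set.range fun i => F (Δ i)) with hS
  have hmem : ∀ x, v x ∈ S := by
    intro x
    have hvx : v x = F (∑ i, μ i x • Δ i) := by
      funext y
      have h1 : F (∑ i, μ i x • Δ i) y = (ρ y * (∑ i, μ i x • Δ i)).trace := rfl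
      have h2 : v x y = (outer (ψ y) * outer (φ x)).trace := rfl
      rw [h1, h2, h x y, trace_outer_mul_outer]
    rw [hvx, map_sum]
    refine Submodule.sum_mem _ fun i _ => ?_
    rw [_root_.map_smul]
    exact Submodule.smul_mem _ _ (Submodule.subset_span ⟨i, rfl⟩)
  -- the restricted family is linearly independent in S
  have huli : LinearIndependent ℂ (fun x => (⟨v x, hmem x⟩ : S)) := by
    apply LinearIndependent.of_comp S.subtype
    exact hvli
  haveI : FiniteDimensional ℂ S :=
    FiniteDimensional.span_of_finite ℂ (Set.finite_range _)
  have hcard := huli.fintype_card_le_finrank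
  have hfin : Module.finrank ℂ S ≤ N := by
    simpa [Set.finrank, hS] using finrank_range_le_card (R := ℂ) (fun i => F (Δ i))
  simp only [Fintype.card_fin] at hcard
  omega
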